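/- In a deep resistive network with bidirectional amplifiers with per-layer gains a^{(ℓ)} > 0 and cumulative gains c^{(ℓ)} = ∏_{m=1}^{ℓ} a^{(m)} (with c^{(0)} = 1), fix a hidden unit (ℓ, k), and suppose ∑_j g^{(ℓ)}_{jk} + ∑_j g^{(ℓ+1)}_{kj} > 0. Then the value of v^{(ℓ)}_k minimizing the amplified energy E(v) = (1/2)∑_{m=1}^{L} ∑_{j,k} g^{(m)}_{jk}(v^{(m-1)}_j/c^{(m-1)} - v^{(m)}_k/c^{(m)})² over v^{(ℓ)}_k ∈ ℝ with all other potentials fixed is p^{(ℓ)}_k = (∑_j g^{(ℓ)}_{jk}·a^{(ℓ)}·v^{(ℓ-1)}_j + ∑_j g^{(ℓ+1)}_{kj}·v^{(ℓ+1)}_j / a^{(ℓ+1)}) / (∑_j g^{(ℓ)}_{jk} + ∑_j g^{(ℓ+1)}_{kj}). -/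

import Mathlib

open Finset

lemma sum_quad {n : ℕ} (g f : Fin n → ℝ) (t : ℝ) :
    ∑ j, g j * (f j - t) ^ 2 =
      ∑ j, g j * f j ^ 2 - 2 * t * ∑ j, g j * f j + t ^ 2 * ∑ j, g j := by
  rw [Finset.mul_sum, Finset.mul_sum, ← Finset.sum_sub_distrib, ← Finset.sum_add_distrib]
  exact Finset.sum_congr rfl fun j _ => by ring

/-- DRN hidden-unit update with bidirectional amplifiers (Appendix D): the value of
`v^{(ℓ)}_k` minimizing the amplified energy, with all other potentials fixed, is
`p = (∑_j g^{(ℓ)}_{jk} a^{(ℓ)} v^{(ℓ-1)}_j + ∑_j g^{(ℓ+1)}_{kj} v^{(ℓ+1)}_j / a^{(ℓ+1)})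
  / (∑_j g^{(ℓ)}_{jk} + ∑_j g^{(ℓ+1)}_{kj})`,
where `c^{(ℓ-1)}, c^{(ℓ)}, c^{(ℓ+1)}` are the cumulative gains. -/
theorem drn_amplified_hidden_unit_update
    (n m : ℕ)
    (gin : Fin n → ℝ) (gout : Fin m → ℝ)
    (u : Fin n → ℝ) (w : Fin m → ℝ)
    (hgin : ∀ j, 0 ≤ gin j) (hgout : ∀ j, 0 ≤ gout j)
    (hpos : 0 < ∑ j, gin j + ∑ j, gout j)
    (aℓ anext cprev cℓ cnext : ℝ)
    (haℓ : 0 < aℓ) (hanext : 0 < anext) (hcprev : 0 < cprev)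
    (hcℓ : cℓ = cprev * aℓ) (hcnext : cnext = cℓ * anext)
    (E : ℝ → ℝ)
    (hE : ∀ x, E x = (1 / 2) * (∑ j, gin j * (u j / cprev - x / cℓ) ^ 2
        + ∑ j, gout j * (x / cℓ - w j / cnext) ^ 2))
    (p : ℝ)
    (hp : p = (∑ j, gin j * aℓ * u j + ∑ j, gout j * (w j / anext))
        / (∑ j, gin j + ∑ j, gout j)) :
    (∀ x, E p ≤ E x) ∧ ∀ x, (∀ y, E x ≤ E y) → x = p := by
  have hcℓpos : 0 < cℓ := by rw [hcℓ]; positivity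
  have hcnpos : 0 < cnext := by rw [hcnext]; positivity
  set A := ∑ j, gin j with hA
  set B := ∑ j, gout j with hB
  set P := ∑ j, gin j * (u j / cprev) with hP
  set Q := ∑ j, gout j * (w j / cnext) with hQ
  have hcℓ0 : cℓ ≠ 0 := ne_of_gt hcℓpos
  have hG0 : A + B ≠ 0 := ne_of_gt hpos
  -- key relation: p * (A + B) = cℓ * (P + Q)
  have hnum1 : ∑ j, gin j * aℓ * u j = cℓ * P := by
    rw [hP, Finset.mul_sum]
    refine Finset.sum_congr rfl fun j _ => ?_
    rw [hcℓ]; field_simp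
  have hnum2 : ∑ j, gout j * (w j / anext) = cℓ * Q := by
    rw [hQ, Finset.mul_sum]
    refine Finset.sum_congr rfl fun j _ => ?_
    rw [hcnext]
    field_simp
  have hpG : p * (A + B) = cℓ * (P + Q) := by
    rw [hp, div_mul_cancel₀ _ hG0, hnum1, hnum2]; ring
  have hS : P + Q = p * (A + B) / cℓ := by rw [hpG]; field_simp
  -- rewrite E in closed form
  have hEform : ∀ t, E t = (1 / 2) * ((∑ j, gin j * (u j / cprev) ^ 2
      - 2 * (t / cℓ) * P + (t / cℓ) ^ 2 * A)
      + (∑ j, gout j * (w j / cnext) ^ 2 - 2 * (t / cℓ) * Q + (t / cℓ) ^ 2 * B)) := by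
    intro t
    rw [hE t]
    congr 1
    rw [← sum_quad gin (fun j => u j / cprev) (t / cℓ),
        ← sum_quad gout (fun j => w j / cnext) (t / cℓ)]
    congr 1
    exact Finset.sum_congr rfl fun j _ => by ring
  have hQ' : Q = p * (A + B) / cℓ - P := by linarith [hS]
  have key : ∀ x, E x - E p = (A + B) / (2 * cℓ ^ 2) * (x - p) ^ 2 := by
    intro x
    rw [hEform x, hEform p, hQ']
    field_simp
    ring
  have hGpos : 0 < (A + B) / (2 * cℓ ^ 2) := div_pos hpos (by positivity)
  constructor
  · intro x
    have h1 := key x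
    have h2 : 0 ≤ (A + B) / (2 * cℓ ^ 2) * (x - p) ^ 2 :=
      mul_nonneg hGpos.le (sq_nonneg _)
    linarith
  · intro x hx
    have h1 := key x
    have h2 : E x ≤ E p := hx p
    have h4 : x - p = 0 := by
      by_contra hne
      have h5 : 0 < (x - p) ^ 2 := by positivity
      have := mul_pos hGpos h5
      linarith
    linarith
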